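/- Let M be a Puiseux monoid with exactly one atom. Then M is almost Furstenberg if and only if M is isomorphic to (ℕ₀, +). -/
import Mathlib


/-- `a` is an atom of the Puiseux monoid `M`. -/
def IsAtomIn (M : AddSubmonoid ℚ) (a : ℚ) : Prop :=
  a ∈ M ∧ a ≠ 0 ∧ ∀ x ∈ M, ∀ y ∈ M, a = x + y → x = 0 ∨ y = 0

/-- `b` is atomic in `M`: it is `0` or a sum of atoms of `M`. -/
def AtomicIn (M : AddSubmonoid ℚ) (b : ℚ) : Prop :=
  b ∈ AddSubmonoid.closure {a | IsAtomIn M a}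

/-- `x` divides `y` in `M`. -/
def DvdIn (M : AddSubmonoid ℚ) (x y : ℚ) : Prop := y - x ∈ M

def QuasiFurstenberg (M : AddSubmonoid ℚ) : Prop :=
  ∀ b ∈ M, b ≠ 0 → ∃ c ∈ M, ∃ a, IsAtomIn M a ∧ DvdIn M a (b + c) ∧ ¬ DvdIn M a c

def QuasiAtomic (M : AddSubmonoid ℚ) : Prop :=
  ∀ b ∈ M, ∃ c ∈ M, AtomicIn M (b + c)

def AlmostFurstenberg (M : AddSubmonoid ℚ) : Prop :=
  ∀ b ∈ M, b ≠ 0 →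
    ∃ c, AtomicIn M c ∧ ∃ a, IsAtomIn M a ∧ DvdIn M a (b + c) ∧ ¬ DvdIn M a c

def NearlyFurstenberg (M : AddSubmonoid ℚ) : Prop :=
  ∃ c ∈ M, ∀ b ∈ M, b ≠ 0 → ∃ a, IsAtomIn M a ∧ DvdIn M a (b + c) ∧ ¬ DvdIn M a c

def Furstenberg (M : AddSubmonoid ℚ) : Prop :=
  ∀ b ∈ M, b ≠ 0 → ∃ a, IsAtomIn M a ∧ DvdIn M a b

def Antimatter (M : AddSubmonoid ℚ) : Prop := ∀ a, ¬ IsAtomIn M a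

def AtomicMonoid (M : AddSubmonoid ℚ) : Prop := ∀ b ∈ M, AtomicIn M b

def NearlyAtomic (M : AddSubmonoid ℚ) : Prop :=
  ∃ c ∈ M, ∀ b ∈ M, b ≠ 0 → AtomicIn M (b + c)

def AlmostAtomic (M : AddSubmonoid ℚ) : Prop :=
  ∀ b ∈ M, ∃ c, AtomicIn M c ∧ AtomicIn M (b + c)

/-- A Puiseux monoid with exactly one atom is almost Furstenberg iff it is
isomorphic to `(ℕ₀, +)`. -/
theorem stmt_9 (M : AddSubmonoid ℚ) (hM : ∀ x ∈ M, 0 ≤ x)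
    (hone : ∃! a, IsAtomIn M a) :
    AlmostFurstenberg M ↔ Nonempty (M ≃+ ℕ) := by
  obtain ⟨a, ha, hu⟩ := hone
  have haM : a ∈ M := ha.1
  have apos : 0 < a := lt_of_le_of_ne (hM a haM) (Ne.symm ha.2.1)
  have hset : {x | IsAtomIn M x} = {a} := by
    ext x
    simp only [Set.mem_setOf_eq, Set.mem_singleton_iff]
    exact ⟨fun hx => hu x hx, fun hx => hx ▸ ha⟩
  constructor
  · intro hAF
    -- step: every nonzero b ∈ M has b - a ∈ M
    have step : ∀ b ∈ M, b ≠ 0 → b - a ∈ M := by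
      intro b hb hb0
      obtain ⟨c, hc, a2, ha2, hdvd, hndvd⟩ := hAF b hb hb0
      have heq : a2 = a := hu a2 ha2
      rw [heq] at hdvd hndvd
      have hc' : c ∈ AddSubmonoid.closure ({a} : Set ℚ) := by
        rw [← hset]; exact hc
      rw [AddSubmonoid.mem_closure_singleton] at hc'
      obtain ⟨n, hn⟩ := hc'
      rcases n with _ | m
      · simp at hn
        subst hn
        simpa [DvdIn] using hdvd
      · exfalso
        apply hndvd
        have : c - a = m • a := by
          rw [← hn, succ_nsmul]; ring
        rw [DvdIn, this]
        exact AddSubmonoid.nsmul_mem M haM m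
    -- every element is a multiple of a
    have rep : ∀ b ∈ M, ∃ k : ℕ, b = k * a := by
      have key : ∀ n : ℕ, ∀ b ∈ M, b ≤ n * a → ∃ k : ℕ, b = k * a := by
        intro n
        induction n with
        | zero =>
          intro b hb hle
          refine ⟨0, ?_⟩
          simp only [Nat.cast_zero, zero_mul] at hle ⊢
          exact le_antisymm hle (hM b hb)
        | succ m ih =>
          intro b hb hle
          by_cases hb0 : b = 0
          · exact ⟨0, by simp [hb0]⟩
          · have hba : b - a ∈ M := step b hb hb0
            have : b - a ≤ m * a := by
              have := hle
              push_cast at this ⊢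
              linarith
            obtain ⟨k, hk⟩ := ih (b - a) hba this
            exact ⟨k + 1, by push_cast; linarith⟩
      intro b hb
      obtain ⟨n, hn⟩ := exists_nat_ge (b / a)
      have : b ≤ n * a := by
        rw [div_le_iff₀ apos] at hn
        linarith
      exact key n b hb this
    -- build the equiv
    have hmem : ∀ n : ℕ, (n : ℚ) * a ∈ M := by
      intro n
      have := AddSubmonoid.nsmul_mem M haM n
      simpa [nsmul_eq_mul] using this
    let f : ℕ →+ M :=
      { toFun := fun n => ⟨(n : ℚ) * a, hmem n⟩
        map_zero' := by ext; simp
        map_add' := by intro x y; ext; push_cast; ring }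
    have hbij : Function.Bijective f := by
      constructor
      · intro x y hxy
        have : (x : ℚ) * a = (y : ℚ) * a := congrArg Subtype.val hxy
        have := mul_right_cancel₀ (ne_of_gt apos) this
        exact_mod_cast this
      · rintro ⟨b, hb⟩
        obtain ⟨k, hk⟩ := rep b hb
        exact ⟨k, by simp [f, hk]⟩
    exact ⟨(AddEquiv.ofBijective f hbij).symm⟩
  · rintro ⟨e⟩
    set g : M := e.symm 1 with hg
    -- g.1 is an atom
    have hgne : (g : ℚ) ≠ 0 := by
      intro h
      have hg0 : g = 0 := Subtype.ext h
      have h1 : e g = e 0 := congrArg e hg0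
      rw [hg, e.apply_symm_apply, map_zero] at h1
      exact one_ne_zero h1
    have hgatom : IsAtomIn M (g : ℚ) := by
      refine ⟨g.2, hgne, ?_⟩
      intro x hx y hy hxy
      have hsum : g = (⟨x, hx⟩ : M) + ⟨y, hy⟩ := Subtype.ext hxy
      have hadd : e g = e (⟨x, hx⟩ + ⟨y, hy⟩) := congrArg e hsum
      rw [hg, e.apply_symm_apply, map_add] at hadd
      rcases Nat.add_eq_one_iff.mp hadd.symm with ⟨h1, _⟩ | ⟨_, h2⟩
      · left
        have : (⟨x, hx⟩ : M) = 0 := by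
          apply e.injective; simpa using h1
        exact congrArg Subtype.val this
      · right
        have : (⟨y, hy⟩ : M) = 0 := by
          apply e.injective; simpa using h2
        exact congrArg Subtype.val this
    have hga : (g : ℚ) = a := hu _ hgatom
    intro b hb hb0
    refine ⟨0, AddSubmonoid.zero_mem _, a, ha, ?_, ?_⟩
    · -- a divides b + 0 = b
      have hn : e ⟨b, hb⟩ ≠ 0 := by
        intro h
        have : (⟨b, hb⟩ : M) = 0 := by
          apply e.injective; simpa using h
        exact hb0 (congrArg Subtype.val this)
      obtain ⟨m, hm⟩ := Nat.exists_eq_succ_of_ne_zero hn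
      have hbm : (⟨b, hb⟩ : M) = (m + 1) • g := by
        apply e.injective
        rw [map_nsmul]
        simp [hg, hm]
      have : b = ((m + 1) • g : M) := congrArg Subtype.val hbm
      rw [DvdIn]
      have hval : b = (m : ℚ) * a + a := by
        rw [this]
        push_cast [succ_nsmul, nsmul_eq_mul, hga]
        ring
      have : b + 0 - a = (m : ℚ) * a := by rw [hval]; ring
      rw [this]
      have := AddSubmonoid.nsmul_mem M haM m
      simpa [nsmul_eq_mul] using this
    · rw [DvdIn]
      intro h
      have := hM _ h
      simp only [zero_sub] at this
      linarith
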